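/- For any integer m ≥ 1 and any unit vector ψ ∈ ℂ^{2^m} with all entries real and nonnegative, there exists a sequence of at most 2^m - 1 two-level real rotations (each acting as Ry(θ) on a pair of coordinates and identity elsewhere) whose product maps the first standard basis vector e₀ to ψ. -/

import Mathlib

open Finset

/-- The two-level real rotation on coordinates (i, j) with angle θ: acts as
Ry(θ) on span(e_i, e_j) and as the identity elsewhere. -/
noncomputable def twoLevelRotation {n : ℕ} (i j : Fin n) (θ : ℝ) :
    Matrix (Fin n) (Fin n) ℝ :=
  Matrix.of fun a b =>
    if a = i ∧ b = i then Real.cos (θ / 2)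
    else if a = i ∧ b = j then -Real.sin (θ / 2)
    else if a = j ∧ b = i then Real.sin (θ / 2)
    else if a = j ∧ b = j then Real.cos (θ / 2)
    else if a = b then 1 else 0

lemma twoLevelRotation_mulVec {n : ℕ} (i j : Fin n) (hij : i ≠ j) (θ : ℝ)
    (w : Fin n → ℝ) :
    (twoLevelRotation i j θ).mulVec w = fun a =>
      if a = i then Real.cos (θ/2) * w i - Real.sin (θ/2) * w j
      else if a = j then Real.sin (θ/2) * w i + Real.cos (θ/2) * w j
      else w a := by
  funext a
  simp only [Matrix.mulVec, dotProduct, twoLevelRotation, Matrix.of_apply]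
  by_cases hai : a = i
  · subst hai
    have key : ∀ b : Fin n, b ∈ Finset.univ →
        (if a = a ∧ b = a then Real.cos (θ / 2)
          else if a = a ∧ b = j then -Real.sin (θ / 2)
          else if a = j ∧ b = a then Real.sin (θ / 2)
          else if a = j ∧ b = j then Real.cos (θ / 2)
          else if a = b then 1 else 0) * w b
        = (if b = a then Real.cos (θ/2) * w a else 0)
          + (if b = j then -(Real.sin (θ/2) * w j) else 0) := by
      intro b _
      by_cases hb : b = a
      · subst hb; simp [hij.symm, Ne.symm hij, hij]
      · by_cases hbj : b = j
        · subst hbj; simp [hb, hij, Ne.symm hij]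
        · simp [hb, hbj, hij, Ne.symm hb]
    rw [Finset.sum_congr rfl key, Finset.sum_add_distrib,
      Finset.sum_ite_eq', Finset.sum_ite_eq']
    simp [hij]
    ring
  · by_cases haj : a = j
    · subst haj
      have key : ∀ b : Fin n, b ∈ Finset.univ →
          (if a = i ∧ b = i then Real.cos (θ / 2)
            else if a = i ∧ b = a then -Real.sin (θ / 2)
            else if a = a ∧ b = i then Real.sin (θ / 2)
            else if a = a ∧ b = a then Real.cos (θ / 2)
            else if a = b then 1 else 0) * w b
          = (if b = i then Real.sin (θ/2) * w i else 0)
            + (if b = a then Real.cos (θ/2) * w a else 0) := by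
        intro b _
        by_cases hb : b = i
        · subst hb; simp [hai, Ne.symm hai]
        · by_cases hba : b = a
          · subst hba; simp [hai, hb]
          · simp [hb, hba, hai, Ne.symm hba]
      rw [Finset.sum_congr rfl key, Finset.sum_add_distrib,
        Finset.sum_ite_eq', Finset.sum_ite_eq']
      simp [hai]
    · have key : ∀ b : Fin n, b ∈ Finset.univ →
          (if a = i ∧ b = i then Real.cos (θ / 2)
            else if a = i ∧ b = j then -Real.sin (θ / 2)
            else if a = j ∧ b = i then Real.sin (θ / 2)
            else if a = j ∧ b = j then Real.cos (θ / 2)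
            else if a = b then 1 else 0) * w b
          = (if b = a then w a else 0) := by
        intro b _
        by_cases hb : b = a
        · subst hb; simp [hai, haj]
        · simp [hai, haj, Ne.symm hb, hb]
      rw [Finset.sum_congr rfl key, Finset.sum_ite_eq']
      simp [hai, haj]

lemma aux_prep (N : ℕ) (hN : 0 < N) (t : ℕ) : t < N →
    ∀ v : Fin N → ℝ, (∀ i, 0 ≤ v i) → (∑ i, v i ^ 2) = 1 →
    (∀ i : Fin N, t < i.val → v i = 0) →
    ∃ (k : ℕ) (_ : k ≤ t) (R : Fin k → Matrix (Fin N) (Fin N) ℝ),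
      (∀ s, ∃ (i j : Fin N) (θ : ℝ), i ≠ j ∧ R s = twoLevelRotation i j θ) ∧
      (List.ofFn R).prod.mulVec (Pi.single (⟨0, hN⟩ : Fin N) 1) = v := by
  induction t with
  | zero =>
    intro _ v hpos hnorm hsupp
    have hv0 : v ⟨0, hN⟩ = 1 := by
      have h1 : (∑ i, v i ^ 2) = v ⟨0, hN⟩ ^ 2 := by
        apply Finset.sum_eq_single
        · intro b _ hb
          have : 0 < b.val := Nat.pos_of_ne_zero (by
            intro h; exact hb (Fin.ext h))
          rw [hsupp b this]; ring
        · intro h; exact absurd (Finset.mem_univ _) h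
      have h2 : v ⟨0, hN⟩ ^ 2 = 1 := by rw [← h1, hnorm]
      nlinarith [hpos ⟨0, hN⟩]
    refine ⟨0, le_refl 0, Fin.elim0, fun s => s.elim0, ?_⟩
    simp only [List.ofFn_zero, List.prod_nil, Matrix.one_mulVec]
    funext i
    by_cases hi : i = ⟨0, hN⟩
    · subst hi; simp [hv0]
    · have : 0 < i.val := Nat.pos_of_ne_zero (fun h => hi (Fin.ext h))
      rw [hsupp i this, Pi.single_eq_of_ne hi]
  | succ t ih =>
    intro ht v hpos hnorm hsupp
    have htN : t < N := Nat.lt_of_succ_lt ht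
    set z : Fin N := ⟨0, hN⟩ with hz
    set j : Fin N := ⟨t + 1, ht⟩ with hjdef
    have hzj : z ≠ j := by
      intro h
      have := congrArg Fin.val h
      simp [hz, hjdef] at this
    set w0 : ℝ := Real.sqrt (v z ^ 2 + v j ^ 2) with hw0
    set w : Fin N → ℝ := fun i => if i = z then w0 else if i = j then 0 else v i with hwdef
    have hw0sq : w0 ^ 2 = v z ^ 2 + v j ^ 2 :=
      Real.sq_sqrt (by positivity)
    have hw0nn : 0 ≤ w0 := Real.sqrt_nonneg _
    -- angle
    set θ : ℝ := 2 * Real.arccos (v z / w0) with hθ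
    have hθ2 : θ / 2 = Real.arccos (v z / w0) := by rw [hθ]; ring
    have hcos : Real.cos (θ / 2) * w0 = v z := by
      rcases eq_or_lt_of_le hw0nn with h0 | h0
      · have : v z = 0 := by nlinarith [sq_nonneg (v z), sq_nonneg (v j)]
        rw [← h0]; simpa using this.symm
      · have hle : v z / w0 ≤ 1 := by
          rw [div_le_one h0]
          nlinarith [sq_nonneg (v j), hpos z]
        have hge : -1 ≤ v z / w0 := by
          have := div_nonneg (hpos z) hw0nn; linarith
        rw [hθ2, Real.cos_arccos hge hle]
        field_simp
    have hsin : Real.sin (θ / 2) * w0 = v j := by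
      rcases eq_or_lt_of_le hw0nn with h0 | h0
      · have : v j = 0 := by nlinarith [sq_nonneg (v z), sq_nonneg (v j)]
        rw [← h0]; simpa using this.symm
      · have hle : v z / w0 ≤ 1 := by
          rw [div_le_one h0]
          nlinarith [sq_nonneg (v j), hpos z]
        have hge : -1 ≤ v z / w0 := by
          have := div_nonneg (hpos z) hw0nn; linarith
        rw [hθ2, Real.sin_arccos]
        have : 1 - (v z / w0) ^ 2 = (v j / w0) ^ 2 := by
          field_simp
          nlinarith
        rw [this, Real.sqrt_sq (div_nonneg (hpos j) hw0nn)]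
        field_simp
    -- w properties
    have hwpos : ∀ i, 0 ≤ w i := by
      intro i
      simp only [hwdef]
      split
      · exact hw0nn
      · split
        · exact le_refl 0
        · exact hpos i
    have hwnorm : (∑ i, w i ^ 2) = 1 := by
      have key : ∀ i : Fin N, i ∈ Finset.univ → w i ^ 2 =
          v i ^ 2 + ((if i = z then v j ^ 2 else 0) + (if i = j then -(v j ^ 2) else 0)) := by
        intro i _
        by_cases hiz : i = z
        · subst hiz; simp [hwdef, hzj, hw0sq]
        · by_cases hij : i = j
          · subst hij; simp [hwdef, hiz]
          · simp [hwdef, hiz, hij, Ne.symm hzj]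
      rw [Finset.sum_congr rfl key, Finset.sum_add_distrib, Finset.sum_add_distrib,
        Finset.sum_ite_eq', Finset.sum_ite_eq', hnorm]
      simp
    have hwsupp : ∀ i : Fin N, t < i.val → w i = 0 := by
      intro i hi
      have hiz : i ≠ z := by
        intro hc; subst hc; simp [hz] at hi
      by_cases hij : i = j
      · simp [hwdef, hiz, hij, Ne.symm hzj]
      · have hlt : t + 1 < i.val := by
          rcases Nat.lt_or_ge (t+1) i.val with h | h
          · exact h
          · exact absurd (Fin.ext (le_antisymm h hi) : i = j) hij
        simp [hwdef, hiz, hij, hsupp i hlt]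
    obtain ⟨k, hk, R', hR', hRe⟩ := ih htN w hwpos hwnorm hwsupp
    refine ⟨k + 1, Nat.succ_le_succ hk,
      Fin.cons (twoLevelRotation z j θ) R', ?_, ?_⟩
    · intro s
      refine Fin.cases ?_ ?_ s
      · exact ⟨z, j, θ, hzj, by simp⟩
      · intro s'
        obtain ⟨i, jj, θ', hij, hr⟩ := hR' s'
        exact ⟨i, jj, θ', hij, by simpa using hr⟩
    · have hofn : List.ofFn (Fin.cons (twoLevelRotation z j θ) R' : Fin (k+1) → _)
          = twoLevelRotation z j θ :: List.ofFn R' := by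
        rw [List.ofFn_succ]
        simp
      rw [hofn, List.prod_cons, ← Matrix.mulVec_mulVec, hRe,
        twoLevelRotation_mulVec z j hzj θ]
      funext i
      by_cases hiz : i = z
      · subst hiz; simp [hwdef, hzj, Ne.symm hzj, hcos]
      · by_cases hij : i = j
        · subst hij; simp [hwdef, hiz, Ne.symm hiz, hsin]
        · simp [hwdef, hiz, hij, Ne.symm hzj]

theorem nonneg_real_state_preparation_by_two_level_rotations
    (m : ℕ) (hm : 1 ≤ m)
    (ψ : EuclideanSpace ℝ (Fin (2 ^ m)))
    (hψ : ‖ψ‖ = 1) (hpos : ∀ i, 0 ≤ ψ i) :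
    ∃ (k : ℕ) (_ : k ≤ 2 ^ m - 1)
      (R : Fin k → Matrix (Fin (2 ^ m)) (Fin (2 ^ m)) ℝ),
      (∀ s, ∃ (i j : Fin (2 ^ m)) (θ : ℝ), i ≠ j ∧ R s = twoLevelRotation i j θ) ∧
      (List.ofFn R).prod.mulVec
        (Pi.single (⟨0, Nat.pow_pos (by norm_num)⟩ : Fin (2 ^ m)) 1) = ψ := by
  have hN : 0 < 2 ^ m := Nat.pow_pos (by norm_num)
  have ht : 2 ^ m - 1 < 2 ^ m := by omega
  have hnorm : (∑ i, (ψ : Fin (2^m) → ℝ) i ^ 2) = 1 := by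
    have h := hψ
    rw [EuclideanSpace.norm_eq] at h
    have h2 : (∑ i, ‖ψ i‖ ^ 2) = 1 := by
      have hnn : (0:ℝ) ≤ ∑ i, ‖ψ i‖ ^ 2 :=
        Finset.sum_nonneg fun i _ => sq_nonneg _
      have := congrArg (· ^ 2) h
      simp only [Real.sq_sqrt hnn, one_pow] at this
      exact this
    rw [← h2]
    exact Finset.sum_congr rfl fun i _ => by rw [Real.norm_eq_abs, sq_abs]
  have hsupp : ∀ i : Fin (2 ^ m), 2 ^ m - 1 < i.val → (ψ : Fin (2^m) → ℝ) i = 0 := by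
    intro i hi
    exact absurd i.isLt (by omega)
  exact aux_prep (2 ^ m) hN (2 ^ m - 1) ht ψ hpos hnorm hsupp
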